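/- Let v₁,…,v_m be distinct nonsink vertices of Γ, and let p_{ik}, q_{ik}, p'_{is}, q'_{it} be paths of length ≥ 1 in Γ all ending at v_i, such that for each i the p'_{is} are distinct, the q'_{it} are distinct, and the pairs (p_{ik}, q_{ik}) are distinct. Then the elements p_{ik}·CK(v_i)'·q_{ik}*, p'_{is}·CK(v_i)', CK(v_i)'·(q'_{it})*, and CK(v_i)' are linearly independent in the Cohn algebra C(Γ). -/

import Mathlib

open scoped Classical

/-- A (row-finite) directed graph. -/
structure DGraph : Type 1 where
  V : Type
  E : Type
  src : E → V
  rng : E → V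

namespace DGraph

variable (G : DGraph)

/-- `Chain u l w` : the list of edges `l` forms a path from `u` to `w`. -/
inductive Chain : G.V → List G.E → G.V → Prop
  | nil (v : G.V) : Chain v [] v
  | cons {e : G.E} {u : G.V} {l : List G.E} {w : G.V} :
      G.src e = u → Chain (G.rng e) l w → Chain u (e :: l) w

/-- Generators of the Cohn algebra: vertices, edges and ghost edges. -/
inductive Gen : Type
  | vert : G.V → Gen
  | edge : G.E → Gen
  | ghost : G.E → Gen

variable (F : Type) [Field F]

/-- Shorthand for the canonical generators of the free algebra. -/
noncomputable abbrev gi (x : G.Gen) : FreeAlgebra F G.Gen := FreeAlgebra.ι F x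

/-- The defining relations of the Cohn algebra of a graph. -/
inductive CohnRel : FreeAlgebra F G.Gen → FreeAlgebra F G.Gen → Prop
  | idem (v : G.V) : CohnRel (gi G F (.vert v) * gi G F (.vert v)) (gi G F (.vert v))
  | orth {v w : G.V} (h : v ≠ w) : CohnRel (gi G F (.vert v) * gi G F (.vert w)) 0
  | src_edge (e : G.E) : CohnRel (gi G F (.vert (G.src e)) * gi G F (.edge e)) (gi G F (.edge e))
  | edge_rng (e : G.E) : CohnRel (gi G F (.edge e) * gi G F (.vert (G.rng e))) (gi G F (.edge e))
  | ghost_src (e : G.E) : CohnRel (gi G F (.ghost e) * gi G F (.vert (G.src e))) (gi G F (.ghost e))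
  | rng_ghost (e : G.E) : CohnRel (gi G F (.vert (G.rng e)) * gi G F (.ghost e)) (gi G F (.ghost e))
  | ghost_edge_ne {e f : G.E} (h : e ≠ f) : CohnRel (gi G F (.ghost e) * gi G F (.edge f)) 0
  | ghost_edge (e : G.E) : CohnRel (gi G F (.ghost e) * gi G F (.edge e)) (gi G F (.vert (G.rng e)))

/-- The Cohn algebra of the graph `G` over the field `F`. -/
noncomputable abbrev CohnAlgebra := RingQuot (G.CohnRel F)

noncomputable def cvert (v : G.V) : G.CohnAlgebra F :=
  RingQuot.mkAlgHom F (G.CohnRel F) (gi G F (.vert v))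

noncomputable def cedge (e : G.E) : G.CohnAlgebra F :=
  RingQuot.mkAlgHom F (G.CohnRel F) (gi G F (.edge e))

noncomputable def cghost (e : G.E) : G.CohnAlgebra F :=
  RingQuot.mkAlgHom F (G.CohnRel F) (gi G F (.ghost e))

/-- The element of the Cohn algebra corresponding to the path starting at `u`
with list of edges `l` (for `l = []` this is the vertex `u`). -/
noncomputable def cpath (u : G.V) (l : List G.E) : G.CohnAlgebra F :=
  G.cvert F u * (l.map (G.cedge F)).prod

/-- The ghost path `p*` corresponding to the path starting at `u` with edges `l`. -/
noncomputable def cstar (u : G.V) (l : List G.E) : G.CohnAlgebra F :=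
  ((l.reverse).map (G.cghost F)).prod * G.cvert F u

/-- A vertex is a nonsink if some edge starts there. -/
def NonSink (v : G.V) : Prop := ∃ e : G.E, G.src e = v

/-- `CK(v)' = v - ∑_{s(e)=v} e e*`. -/
noncomputable def ckp [∀ v : G.V, Fintype {e : G.E // G.src e = v}] (v : G.V) :
    G.CohnAlgebra F :=
  G.cvert F v - ∑ e : {e : G.E // G.src e = v}, G.cedge F e.1 * G.cghost F e.1

/-- The defining relations of the Leavitt path algebra: the Cohn relations together with
the Cuntz-Krieger relations at nonsink vertices. -/
inductive LeavittRel [∀ v : G.V, Fintype {e : G.E // G.src e = v}] :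
    FreeAlgebra F G.Gen → FreeAlgebra F G.Gen → Prop
  | cohn {x y : FreeAlgebra F G.Gen} : G.CohnRel F x y → LeavittRel x y
  | ck (v : G.V) (h : G.NonSink v) :
      LeavittRel (∑ e : {e : G.E // G.src e = v}, gi G F (.edge e.1) * gi G F (.ghost e.1))
        (gi G F (.vert v))

/-- The Leavitt path algebra of the row-finite graph `G` over `F`. -/
noncomputable abbrev Leavitt [∀ v : G.V, Fintype {e : G.E // G.src e = v}] :=
  RingQuot (G.LeavittRel F)

noncomputable def lvert [∀ v : G.V, Fintype {e : G.E // G.src e = v}] (v : G.V) :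
    G.Leavitt F := RingQuot.mkAlgHom F (G.LeavittRel F) (gi G F (.vert v))

noncomputable def ledge [∀ v : G.V, Fintype {e : G.E // G.src e = v}] (e : G.E) :
    G.Leavitt F := RingQuot.mkAlgHom F (G.LeavittRel F) (gi G F (.edge e))

noncomputable def lghost [∀ v : G.V, Fintype {e : G.E // G.src e = v}] (e : G.E) :
    G.Leavitt F := RingQuot.mkAlgHom F (G.LeavittRel F) (gi G F (.ghost e))

noncomputable def lpath [∀ v : G.V, Fintype {e : G.E // G.src e = v}] (u : G.V)
    (l : List G.E) : G.Leavitt F :=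
  G.lvert F u * (l.map (G.ledge F)).prod

noncomputable def lstar [∀ v : G.V, Fintype {e : G.E // G.src e = v}] (u : G.V)
    (l : List G.E) : G.Leavitt F :=
  ((l.reverse).map (G.lghost F)).prod * G.lvert F u

end DGraph

namespace DGraph

variable (G : DGraph) (F : Type) [Field F]

theorem chain_end_unique {u : G.V} {l : List G.E} {w w' : G.V}
    (h : G.Chain u l w) (h' : G.Chain u l w') : w = w' := by
  induction h generalizing w' with
  | nil v => cases h'; rfl
  | cons hs hc ih => cases h' with | cons hs' hc' => exact ih hc'

noncomputable def tgt : G.Gen → G.V × List G.E → ((G.V × List G.E) →₀ F)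
  | .vert v => fun b => if b.1 = v then Finsupp.single b 1 else 0
  | .edge e => fun b => if b.1 = G.rng e then Finsupp.single (G.src e, e :: b.2) 1 else 0
  | .ghost e => fun b =>
      if b.2.head? = some e ∧ b.1 = G.src e then Finsupp.single (G.rng e, b.2.tail) 1 else 0

noncomputable def op (x : G.Gen) : Module.End F ((G.V × List G.E) →₀ F) :=
  Finsupp.lsum F fun b => LinearMap.toSpanSingleton F _ (G.tgt F x b)

lemma op_single (x : G.Gen) (b : G.V × List G.E) :
    G.op F x (Finsupp.single b 1) = G.tgt F x b := by
  simp [op]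

lemma end_ext {f g : Module.End F ((G.V × List G.E) →₀ F)}
    (h : ∀ b, f (Finsupp.single b 1) = g (Finsupp.single b 1)) : f = g := by
  apply Finsupp.lhom_ext'
  intro b
  apply LinearMap.ext_ring
  simpa using h b

private lemma key (a b : G.Gen) (z : Module.End F ((G.V × List G.E) →₀ F))
    (hz : ∀ c : G.V × List G.E,
      G.op F a (G.op F b (Finsupp.single c 1)) = z (Finsupp.single c 1)) :
    FreeAlgebra.lift F (G.op F) (gi G F a * gi G F b) = z := by
  rw [map_mul, FreeAlgebra.lift_ι_apply, FreeAlgebra.lift_ι_apply]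
  exact G.end_ext F fun c => hz c

lemma op_rel {x y : FreeAlgebra F G.Gen} (h : G.CohnRel F x y) :
    FreeAlgebra.lift F (G.op F) x = FreeAlgebra.lift F (G.op F) y := by
  induction h with
  | idem v =>
      rw [FreeAlgebra.lift_ι_apply]
      apply key
      rintro ⟨u, l⟩
      simp only [op_single, tgt]
      split_ifs <;> simp_all [op_single, tgt]
  | orth hvw =>
      rw [map_zero]
      apply key
      rintro ⟨u, l⟩
      simp only [op_single, tgt]
      split_ifs <;> simp_all [op_single, tgt, hvw, (Ne.symm hvw)]
  | src_edge e =>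
      rw [FreeAlgebra.lift_ι_apply]
      apply key
      rintro ⟨u, l⟩
      simp only [op_single, tgt]
      split_ifs <;> simp_all [op_single, tgt]
  | edge_rng e =>
      rw [FreeAlgebra.lift_ι_apply]
      apply key
      rintro ⟨u, l⟩
      simp only [op_single, tgt]
      split_ifs <;> simp_all [op_single, tgt]
  | ghost_src e =>
      rw [FreeAlgebra.lift_ι_apply]
      apply key
      rintro ⟨u, l⟩
      simp only [op_single, tgt]
      split_ifs <;> simp_all [op_single, tgt]
  | rng_ghost e =>
      rw [FreeAlgebra.lift_ι_apply]
      apply key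
      rintro ⟨u, l⟩
      simp only [op_single, tgt]
      split_ifs <;> simp_all [op_single, tgt]
  | ghost_edge_ne hef =>
      rw [map_zero]
      apply key
      rintro ⟨u, l⟩
      simp only [op_single, tgt]
      split_ifs <;> simp_all [op_single, tgt, hef, (Ne.symm hef)]
  | ghost_edge e =>
      rw [FreeAlgebra.lift_ι_apply]
      apply key
      rintro ⟨u, l⟩
      simp only [op_single, tgt]
      split_ifs <;> simp_all [op_single, tgt]

noncomputable def rep : G.CohnAlgebra F →ₐ[F] Module.End F ((G.V × List G.E) →₀ F) :=
  RingQuot.liftAlgHom F ⟨FreeAlgebra.lift F (G.op F), fun _ _ h => G.op_rel F h⟩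

lemma rep_vert (v : G.V) : G.rep F (G.cvert F v) = G.op F (.vert v) := by
  rw [cvert, rep, RingQuot.liftAlgHom_mkAlgHom_apply, FreeAlgebra.lift_ι_apply]

lemma rep_edge (e : G.E) : G.rep F (G.cedge F e) = G.op F (.edge e) := by
  rw [cedge, rep, RingQuot.liftAlgHom_mkAlgHom_apply, FreeAlgebra.lift_ι_apply]

lemma rep_ghost (e : G.E) : G.rep F (G.cghost F e) = G.op F (.ghost e) := by
  rw [cghost, rep, RingQuot.liftAlgHom_mkAlgHom_apply, FreeAlgebra.lift_ι_apply]

lemma rep_one (x) : G.rep F 1 x = x := by simp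

lemma rep_eprod {u : G.V} {l : List G.E} {w : G.V} (h : G.Chain u l w) (m : List G.E) :
    G.rep F ((l.map (G.cedge F)).prod) (Finsupp.single (w, m) 1) =
      Finsupp.single (u, l ++ m) 1 := by
  induction h generalizing m with
  | nil v => simp
  | @cons e u l w hs hc ih =>
      rw [List.map_cons, List.prod_cons, map_mul, Module.End.mul_apply, ih m, rep_edge]
      simp [op_single, tgt, hs]

lemma rep_path {u : G.V} {l : List G.E} {w : G.V} (h : G.Chain u l w) (m : List G.E) :
    G.rep F (G.cpath F u l) (Finsupp.single (w, m) 1) = Finsupp.single (u, l ++ m) 1 := by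
  rw [cpath, map_mul, Module.End.mul_apply, rep_eprod G F h m, rep_vert]
  simp [op_single, tgt]

lemma rep_gprod {u : G.V} {l : List G.E} {w : G.V} (h : G.Chain u l w) (m : List G.E) :
    G.rep F ((l.reverse.map (G.cghost F)).prod) (Finsupp.single (u, l ++ m) 1) =
      Finsupp.single (w, m) 1 := by
  induction h generalizing m with
  | nil v => simp
  | @cons e u l w hs hc ih =>
      rw [List.reverse_cons, List.map_append, List.prod_append, map_mul,
        Module.End.mul_apply]
      have h1 : G.rep F ((List.map (G.cghost F) [e]).prod)
          (Finsupp.single (u, (e :: l) ++ m) 1) = Finsupp.single (G.rng e, l ++ m) 1 := by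
        simp [rep_ghost, op_single, tgt, hs.symm]
      rw [h1, ih m]

lemma rep_star {u : G.V} {l : List G.E} {w : G.V} (h : G.Chain u l w) (m : List G.E) :
    G.rep F (G.cstar F u l) (Finsupp.single (u, l ++ m) 1) = Finsupp.single (w, m) 1 := by
  rw [cstar, map_mul, Module.End.mul_apply, rep_vert]
  have h1 : G.op F (.vert u) (Finsupp.single (u, l ++ m) 1) =
      Finsupp.single (u, l ++ m) 1 := by simp [op_single, tgt]
  rw [h1, rep_gprod G F h m]

lemma cvert_src_cedge (e : G.E) :
    G.cvert F (G.src e) * G.cedge F e = G.cedge F e := by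
  simpa [cvert, cedge, map_mul] using
    RingQuot.mkAlgHom_rel F (CohnRel.src_edge (G := G) (F := F) e)

lemma cghost_cvert_src (e : G.E) :
    G.cghost F e * G.cvert F (G.src e) = G.cghost F e := by
  simpa [cvert, cghost, map_mul] using
    RingQuot.mkAlgHom_rel F (CohnRel.ghost_src (G := G) (F := F) e)

lemma cvert_rng_cghost (e : G.E) :
    G.cvert F (G.rng e) * G.cghost F e = G.cghost F e := by
  simpa [cvert, cghost, map_mul] using
    RingQuot.mkAlgHom_rel F (CohnRel.rng_ghost (G := G) (F := F) e)

lemma cvert_idem (v : G.V) : G.cvert F v * G.cvert F v = G.cvert F v := by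
  simpa [cvert, map_mul] using
    RingQuot.mkAlgHom_rel F (CohnRel.idem (G := G) (F := F) v)

variable [∀ v : G.V, Fintype {e : G.E // G.src e = v}]

lemma cvert_mul_ckp (v : G.V) : G.cvert F v * G.ckp F v = G.ckp F v := by
  rw [ckp, mul_sub, cvert_idem, Finset.mul_sum]
  congr 1
  refine Finset.sum_congr rfl fun f _ => ?_
  have h := G.cvert_src_cedge F f.1
  rw [f.2] at h
  rw [← mul_assoc, h]

lemma ckp_mul_cvert (v : G.V) : G.ckp F v * G.cvert F v = G.ckp F v := by
  rw [ckp, sub_mul, cvert_idem, Finset.sum_mul]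
  congr 1
  refine Finset.sum_congr rfl fun f _ => ?_
  have h := G.cghost_cvert_src F f.1
  rw [f.2] at h
  rw [mul_assoc, h]

lemma rep_ckp_single {w : G.V} {m : List G.E} {z : G.V} (v : G.V) (hm : G.Chain w m z) :
    G.rep F (G.ckp F v) (Finsupp.single (w, m) 1) =
      if (w, m) = (v, ([] : List G.E)) then Finsupp.single (v, ([] : List G.E)) 1 else 0 := by
  rw [ckp, map_sub, map_sum, LinearMap.sub_apply, LinearMap.sum_apply, rep_vert]
  by_cases hw : w = v
  · subst hw
    rcases m with _ | ⟨e, m'⟩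
    · have hz : ∀ f : {e : G.E // G.src e = w},
          G.rep F (G.cedge F f.1)
            (G.rep F (G.cghost F f.1) (Finsupp.single (w, ([] : List G.E)) 1)) = 0 := by
        intro f
        rw [rep_ghost]
        simp [op_single, tgt]
      simp [map_mul, Module.End.mul_apply, hz, op_single, tgt]
    · cases hm with
      | cons hs hc =>
        have he : G.src e = w := hs
        rw [Finset.sum_eq_single_of_mem (⟨e, he⟩ : {f : G.E // G.src f = w})
            (Finset.mem_univ _) ?side]
        · simp [map_mul, Module.End.mul_apply, rep_ghost, rep_edge, op_single, tgt, he]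
        case side =>
          intro f _ hf
          rw [map_mul, Module.End.mul_apply, rep_ghost, op_single]
          simp only [tgt]
          rw [if_neg, map_zero]
          rintro ⟨h1, -⟩
          exact hf (Subtype.ext (by simpa using h1.symm))
  · have hz : ∀ f : {e : G.E // G.src e = v},
        G.rep F (G.cedge F f.1)
          (G.rep F (G.cghost F f.1) (Finsupp.single (w, m) 1)) = 0 := by
      intro f
      rw [rep_ghost, op_single]
      simp only [tgt]
      rw [if_neg, map_zero]
      rintro ⟨-, h2⟩
      exact hw (h2.trans f.2)
    simp [map_mul, Module.End.mul_apply, hz, op_single, tgt, hw, Prod.ext_iff]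

lemma cvert_rng_cghost' (e : G.E) (x : G.CohnAlgebra F) :
    G.cvert F (G.rng e) * (G.cghost F e * x) = G.cghost F e * x := by
  rw [← mul_assoc, cvert_rng_cghost]

lemma rep_ckp_star {u : G.V} {q : List G.E} {v : G.V} {w : G.V} {m : List G.E} {z : G.V}
    (hq : G.Chain u q v) (hm : G.Chain w m z) :
    G.rep F (G.ckp F v * G.cstar F u q) (Finsupp.single (w, m) 1) =
      if (w, m) = (u, q) then Finsupp.single (v, ([] : List G.E)) 1 else 0 := by
  induction hq generalizing w m z with
  | nil v =>
      have hc : G.cstar F v [] = G.cvert F v := by simp [cstar]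
      rw [hc, map_mul, Module.End.mul_apply, rep_vert]
      by_cases hw : w = v
      · subst hw
        rw [op_single]
        simp only [tgt]
        rw [if_pos trivial]
        exact G.rep_ckp_single F _ hm
      · rw [op_single]
        simp only [tgt]
        rw [if_neg hw, map_zero, if_neg]
        simp [Prod.ext_iff, hw]
  | @cons e u q' v hs hq' ih =>
      have hid : G.ckp F v * G.cstar F u (e :: q') =
          (G.ckp F v * G.cstar F (G.rng e) q') * (G.cghost F e * G.cvert F u) := by
        rw [cstar, cstar, List.reverse_cons, List.map_append, List.prod_append]
        simp only [List.map_cons, List.map_nil, List.prod_cons, List.prod_nil, mul_one,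
          mul_assoc]
        rw [cvert_rng_cghost']
      rw [hid, map_mul, Module.End.mul_apply,
        map_mul (G.rep F) (G.cghost F e) (G.cvert F u), Module.End.mul_apply, rep_ghost, rep_vert]
      by_cases hw : w = u
      · subst hw
        rw [op_single]
        simp only [tgt]
        rw [if_pos trivial]
        rcases m with _ | ⟨f, m'⟩
        · rw [op_single]
          simp only [tgt]
          rw [if_neg (by simp), map_zero, if_neg (by simp)]
        · by_cases hf : f = e
          · subst hf
            cases hm with
            | cons hs2 hc2 =>
              rw [op_single]
              simp only [tgt, List.head?_cons]
              rw [if_pos ⟨trivial, hs.symm⟩, List.tail_cons, ih hc2]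
              by_cases hm' : m' = q' <;> simp [hm']
          · rw [op_single]
            simp only [tgt, List.head?_cons]
            rw [if_neg (by simp [hf])]
            simp [hf]
      · rw [op_single]
        simp only [tgt]
        rw [if_neg hw, map_zero, map_zero, if_neg (by simp [Prod.ext_iff, hw])]

lemma rep_elt {r : G.V} {p : List G.E} {u : G.V} {q : List G.E} {v : G.V}
    {w : G.V} {m : List G.E} {z : G.V}
    (hp : G.Chain r p v) (hq : G.Chain u q v) (hm : G.Chain w m z) :
    G.rep F (G.cpath F r p * G.ckp F v * G.cstar F u q) (Finsupp.single (w, m) 1) =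
      if (w, m) = (u, q) then Finsupp.single (r, p) 1 else 0 := by
  rw [mul_assoc, map_mul, Module.End.mul_apply, G.rep_ckp_star F hq hm]
  by_cases h : (w, m) = (u, q)
  · rw [if_pos h, if_pos h]
    simpa using G.rep_path F hp []
  · rw [if_neg h, if_neg h, map_zero]

lemma master_li (X : Type) (vx : X → G.V) (P Q : X → G.V × List G.E)
    (hP : ∀ x, G.Chain (P x).1 (P x).2 (vx x)) (hQ : ∀ x, G.Chain (Q x).1 (Q x).2 (vx x))
    (hinj : Function.Injective fun x => (P x, Q x)) :
    LinearIndependent F fun x =>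
      G.cpath F (P x).1 (P x).2 * G.ckp F (vx x) * G.cstar F (Q x).1 (Q x).2 := by
  rw [linearIndependent_iff']
  intro s g hsum x₀ hx₀
  have h1 := congrArg (G.rep F) hsum
  rw [map_sum, map_zero] at h1
  have h2 := congrArg (fun T : Module.End F ((G.V × List G.E) →₀ F) =>
    T (Finsupp.single (Q x₀) 1)) h1
  simp only [LinearMap.sum_apply, LinearMap.zero_apply, map_smul,
    LinearMap.smul_apply] at h2
  have h3 : ∀ i, G.rep F
      (G.cpath F (P i).1 (P i).2 * G.ckp F (vx i) * G.cstar F (Q i).1 (Q i).2)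
      (Finsupp.single (Q x₀) 1) =
      if Q x₀ = Q i then Finsupp.single (P i) 1 else 0 := by
    intro i
    simpa using G.rep_elt F (hP i) (hQ i) (hQ x₀)
  rw [Finset.sum_congr rfl (fun i _ => by rw [h3 i])] at h2
  have h4 := congrArg (fun f : (G.V × List G.E) →₀ F => f (P x₀)) h2
  simp only [Finset.sum_apply', Finsupp.smul_apply, Finsupp.coe_zero, Pi.zero_apply] at h4
  rw [Finset.sum_eq_single_of_mem x₀ hx₀] at h4
  · simpa using h4
  · intro i _ hi
    by_cases hQi : Q x₀ = Q i
    · rw [if_pos hQi]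
      rw [Finsupp.single_apply, if_neg, smul_zero]
      intro hPi
      exact hi (hinj (show (P i, Q i) = (P x₀, Q x₀) by rw [hPi, hQi]))
    · rw [if_neg hQi]
      simp

end DGraph


open DGraph

/-- Let `v_i` (`i ∈ ι`) be distinct nonsink vertices of `Γ` and let
`p_{ik}, q_{ik}` (`k ∈ K₁`), `p'_{is}` (`s ∈ K₂`), `q'_{it}` (`t ∈ K₃`) be paths of
length ≥ 1 ending at the corresponding `v_i`, such that for each `i` the `p'_{is}` are
distinct, the `q'_{it}` are distinct, and the pairs `(p_{ik}, q_{ik})` are distinct.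
Then the elements `p_{ik}·CK(v_i)'·q_{ik}*`, `p'_{is}·CK(v_i)'`, `CK(v_i)'·(q'_{it})*`
and `CK(v_i)'` are linearly independent in `C(Γ)`. -/
theorem stmt6 (G : DGraph) (F : Type) [Field F]
    [∀ v : G.V, Fintype {e : G.E // G.src e = v}]
    (ι : Type) (vs : ι → G.V) (hvs : Function.Injective vs)
    (hns : ∀ i : ι, G.NonSink (vs i))
    (K₁ K₂ K₃ : Type)
    (i₁ : K₁ → ι) (p₁ q₁ : K₁ → G.V × List G.E)
    (i₂ : K₂ → ι) (p₂ : K₂ → G.V × List G.E)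
    (i₃ : K₃ → ι) (q₃ : K₃ → G.V × List G.E)
    -- the paths are paths of `Γ` ending at the corresponding `v_i`, of length ≥ 1:
    (hp₁ : ∀ k, G.Chain (p₁ k).1 (p₁ k).2 (vs (i₁ k)) ∧ (p₁ k).2 ≠ [])
    (hq₁ : ∀ k, G.Chain (q₁ k).1 (q₁ k).2 (vs (i₁ k)) ∧ (q₁ k).2 ≠ [])
    (hp₂ : ∀ k, G.Chain (p₂ k).1 (p₂ k).2 (vs (i₂ k)) ∧ (p₂ k).2 ≠ [])
    (hq₃ : ∀ k, G.Chain (q₃ k).1 (q₃ k).2 (vs (i₃ k)) ∧ (q₃ k).2 ≠ [])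
    -- distinctness assumptions:
    (hd₁ : Function.Injective (fun k => (i₁ k, p₁ k, q₁ k)))
    (hd₂ : Function.Injective (fun k => (i₂ k, p₂ k)))
    (hd₃ : Function.Injective (fun k => (i₃ k, q₃ k))) :
    LinearIndependent F
      (Sum.elim
        (fun k : K₁ =>
          G.cpath F (p₁ k).1 (p₁ k).2 * G.ckp F (vs (i₁ k)) * G.cstar F (q₁ k).1 (q₁ k).2)
        (Sum.elim
          (fun k : K₂ => G.cpath F (p₂ k).1 (p₂ k).2 * G.ckp F (vs (i₂ k)))
          (Sum.elim
            (fun k : K₃ => G.ckp F (vs (i₃ k)) * G.cstar F (q₃ k).1 (q₃ k).2)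
            (fun i : ι => G.ckp F (vs i))))) := by
  classical
  have hP : ∀ x : K₁ ⊕ (K₂ ⊕ (K₃ ⊕ ι)),
      G.Chain ((Sum.elim p₁ (Sum.elim p₂ (Sum.elim (fun k => (vs (i₃ k), ([] : List G.E)))
          (fun i => (vs i, ([] : List G.E))))) x).1)
        ((Sum.elim p₁ (Sum.elim p₂ (Sum.elim (fun k => (vs (i₃ k), ([] : List G.E)))
          (fun i => (vs i, ([] : List G.E))))) x).2)
        (Sum.elim (fun k => vs (i₁ k)) (Sum.elim (fun k => vs (i₂ k))
          (Sum.elim (fun k => vs (i₃ k)) vs)) x) := by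
    rintro (k | (k | (k | i)))
    · exact (hp₁ k).1
    · exact (hp₂ k).1
    · exact Chain.nil _
    · exact Chain.nil _
  have hQ : ∀ x : K₁ ⊕ (K₂ ⊕ (K₃ ⊕ ι)),
      G.Chain ((Sum.elim q₁ (Sum.elim (fun k => (vs (i₂ k), ([] : List G.E)))
          (Sum.elim q₃ (fun i => (vs i, ([] : List G.E))))) x).1)
        ((Sum.elim q₁ (Sum.elim (fun k => (vs (i₂ k), ([] : List G.E)))
          (Sum.elim q₃ (fun i => (vs i, ([] : List G.E))))) x).2)
        (Sum.elim (fun k => vs (i₁ k)) (Sum.elim (fun k => vs (i₂ k))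
          (Sum.elim (fun k => vs (i₃ k)) vs)) x) := by
    rintro (k | (k | (k | i)))
    · exact (hq₁ k).1
    · exact Chain.nil _
    · exact (hq₃ k).1
    · exact Chain.nil _
  have hinj : Function.Injective fun x : K₁ ⊕ (K₂ ⊕ (K₃ ⊕ ι)) =>
      ((Sum.elim p₁ (Sum.elim p₂ (Sum.elim (fun k => (vs (i₃ k), ([] : List G.E)))
          (fun i => (vs i, ([] : List G.E))))) x),
       (Sum.elim q₁ (Sum.elim (fun k => (vs (i₂ k), ([] : List G.E)))
          (Sum.elim q₃ (fun i => (vs i, ([] : List G.E))))) x)) := by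
    rintro (a | (a | (a | a))) (b | (b | (b | b))) h
    -- (1,1)
    · have h1 : p₁ a = p₁ b := congrArg Prod.fst h
      have h2 : q₁ a = q₁ b := congrArg Prod.snd h
      have hb := (hp₁ b).1
      rw [← h1] at hb
      have hv : i₁ a = i₁ b := hvs (G.chain_end_unique (hp₁ a).1 hb)
      exact congrArg Sum.inl
        (hd₁ (show (i₁ a, p₁ a, q₁ a) = (i₁ b, p₁ b, q₁ b) by rw [hv, h1, h2]))
    -- (1,2)
    · have h2 : q₁ a = (vs (i₂ b), []) := congrArg Prod.snd h
      exact absurd (congrArg Prod.snd h2) (hq₁ a).2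
    -- (1,3)
    · have h1 : p₁ a = (vs (i₃ b), []) := congrArg Prod.fst h
      exact absurd (congrArg Prod.snd h1) (hp₁ a).2
    -- (1,4)
    · have h1 : p₁ a = (vs b, []) := congrArg Prod.fst h
      exact absurd (congrArg Prod.snd h1) (hp₁ a).2
    -- (2,1)
    · have h2 : (vs (i₂ a), ([] : List G.E)) = q₁ b := congrArg Prod.snd h
      exact absurd (congrArg Prod.snd h2).symm (hq₁ b).2
    -- (2,2)
    · have h1 : p₂ a = p₂ b := congrArg Prod.fst h
      have h2 : (vs (i₂ a), ([] : List G.E)) = (vs (i₂ b), []) := congrArg Prod.snd h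
      have hv : i₂ a = i₂ b := hvs (congrArg Prod.fst h2)
      exact congrArg (fun k => Sum.inr (Sum.inl k))
        (hd₂ (show (i₂ a, p₂ a) = (i₂ b, p₂ b) by rw [hv, h1]))
    -- (2,3)
    · have h1 : p₂ a = (vs (i₃ b), []) := congrArg Prod.fst h
      exact absurd (congrArg Prod.snd h1) (hp₂ a).2
    -- (2,4)
    · have h1 : p₂ a = (vs b, []) := congrArg Prod.fst h
      exact absurd (congrArg Prod.snd h1) (hp₂ a).2
    -- (3,1)
    · have h1 : (vs (i₃ a), ([] : List G.E)) = p₁ b := congrArg Prod.fst h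
      exact absurd (congrArg Prod.snd h1).symm (hp₁ b).2
    -- (3,2)
    · have h1 : (vs (i₃ a), ([] : List G.E)) = p₂ b := congrArg Prod.fst h
      exact absurd (congrArg Prod.snd h1).symm (hp₂ b).2
    -- (3,3)
    · have h1 : (vs (i₃ a), ([] : List G.E)) = (vs (i₃ b), []) := congrArg Prod.fst h
      have h2 : q₃ a = q₃ b := congrArg Prod.snd h
      have hv : i₃ a = i₃ b := hvs (congrArg Prod.fst h1)
      exact congrArg (fun k => Sum.inr (Sum.inr (Sum.inl k)))
        (hd₃ (show (i₃ a, q₃ a) = (i₃ b, q₃ b) by rw [hv, h2]))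
    -- (3,4)
    · have h2 : q₃ a = (vs b, []) := congrArg Prod.snd h
      exact absurd (congrArg Prod.snd h2) (hq₃ a).2
    -- (4,1)
    · have h1 : (vs a, ([] : List G.E)) = p₁ b := congrArg Prod.fst h
      exact absurd (congrArg Prod.snd h1).symm (hp₁ b).2
    -- (4,2)
    · have h1 : (vs a, ([] : List G.E)) = p₂ b := congrArg Prod.fst h
      exact absurd (congrArg Prod.snd h1).symm (hp₂ b).2
    -- (4,3)
    · have h2 : (vs a, ([] : List G.E)) = q₃ b := congrArg Prod.snd h
      exact absurd (congrArg Prod.snd h2).symm (hq₃ b).2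
    -- (4,4)
    · have h1 : (vs a, ([] : List G.E)) = (vs b, []) := congrArg Prod.fst h
      exact congrArg (fun k => Sum.inr (Sum.inr (Sum.inr k)))
        (hvs (congrArg Prod.fst h1))
  have H := G.master_li F (K₁ ⊕ (K₂ ⊕ (K₃ ⊕ ι)))
    (Sum.elim (fun k => vs (i₁ k)) (Sum.elim (fun k => vs (i₂ k))
      (Sum.elim (fun k => vs (i₃ k)) vs)))
    (Sum.elim p₁ (Sum.elim p₂ (Sum.elim (fun k => (vs (i₃ k), ([] : List G.E)))
      (fun i => (vs i, ([] : List G.E))))))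
    (Sum.elim q₁ (Sum.elim (fun k => (vs (i₂ k), ([] : List G.E)))
      (Sum.elim q₃ (fun i => (vs i, ([] : List G.E))))))
    hP hQ hinj
  have hfun : (Sum.elim
      (fun k : K₁ =>
        G.cpath F (p₁ k).1 (p₁ k).2 * G.ckp F (vs (i₁ k)) * G.cstar F (q₁ k).1 (q₁ k).2)
      (Sum.elim
        (fun k : K₂ => G.cpath F (p₂ k).1 (p₂ k).2 * G.ckp F (vs (i₂ k)))
        (Sum.elim
          (fun k : K₃ => G.ckp F (vs (i₃ k)) * G.cstar F (q₃ k).1 (q₃ k).2)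
          (fun i : ι => G.ckp F (vs i))))) =
      fun x : K₁ ⊕ (K₂ ⊕ (K₃ ⊕ ι)) =>
        G.cpath F ((Sum.elim p₁ (Sum.elim p₂ (Sum.elim (fun k => (vs (i₃ k), ([] : List G.E)))
            (fun i => (vs i, ([] : List G.E))))) x).1)
          ((Sum.elim p₁ (Sum.elim p₂ (Sum.elim (fun k => (vs (i₃ k), ([] : List G.E)))
            (fun i => (vs i, ([] : List G.E))))) x).2) *
        G.ckp F (Sum.elim (fun k => vs (i₁ k)) (Sum.elim (fun k => vs (i₂ k))
            (Sum.elim (fun k => vs (i₃ k)) vs)) x) *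
        G.cstar F ((Sum.elim q₁ (Sum.elim (fun k => (vs (i₂ k), ([] : List G.E)))
            (Sum.elim q₃ (fun i => (vs i, ([] : List G.E))))) x).1)
          ((Sum.elim q₁ (Sum.elim (fun k => (vs (i₂ k), ([] : List G.E)))
            (Sum.elim q₃ (fun i => (vs i, ([] : List G.E))))) x).2) := by
    funext x
    rcases x with k | (k | (k | i))
    · rfl
    · show G.cpath F (p₂ k).1 (p₂ k).2 * G.ckp F (vs (i₂ k)) =
        G.cpath F (p₂ k).1 (p₂ k).2 * G.ckp F (vs (i₂ k)) * G.cstar F (vs (i₂ k)) []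
      rw [show G.cstar F (vs (i₂ k)) [] = G.cvert F (vs (i₂ k)) by simp [cstar],
        mul_assoc, ckp_mul_cvert]
    · show G.ckp F (vs (i₃ k)) * G.cstar F (q₃ k).1 (q₃ k).2 =
        G.cpath F (vs (i₃ k)) [] * G.ckp F (vs (i₃ k)) * G.cstar F (q₃ k).1 (q₃ k).2
      rw [show G.cpath F (vs (i₃ k)) [] = G.cvert F (vs (i₃ k)) by simp [cpath],
        cvert_mul_ckp]
    · show G.ckp F (vs i) = G.cpath F (vs i) [] * G.ckp F (vs i) * G.cstar F (vs i) []
      rw [show G.cpath F (vs i) [] = G.cvert F (vs i) by simp [cpath],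
        show G.cstar F (vs i) [] = G.cvert F (vs i) by simp [cstar],
        cvert_mul_ckp, ckp_mul_cvert]
  rw [hfun]
  exact H
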